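/- Let A be a Banach algebra with unit, S₀ ∈ A, and R = S₀ - S₀² with ‖R‖ < 1/4. Define T = (2S₀ - 1) · (1 - 4R)^{-1/2}, where (1 - 4R)^{-1/2} is given by the convergent binomial series Σ_{k≥0} C(2k,k) R^k. Then T² = 1, and hence S = (1 + T)/2 is an idempotent: S² = S. -/

import Mathlib

open Finset

lemma centralBinom_convolution (n : ℕ) :
    ∑ i ∈ range (n + 1), ((Nat.centralBinom i : ℚ) * Nat.centralBinom (n - i)) = 4 ^ n := by
  induction n with
  | zero => simp [Nat.centralBinom]
  | succ n ih =>
    set c : ℕ → ℚ := fun i => (Nat.centralBinom i : ℚ) with hc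
    have key : ∀ m : ℕ, ∑ i ∈ range (m + 1), (i : ℚ) * (c i * c (m - i))
        = (m : ℚ) / 2 * ∑ i ∈ range (m + 1), c i * c (m - i) := by
      intro m
      have h1 : ∑ i ∈ range (m + 1), (i : ℚ) * (c i * c (m - i))
          = ∑ i ∈ range (m + 1), ((m : ℚ) - i) * (c i * c (m - i)) := by
        rw [← Finset.sum_range_reflect (fun i => ((m : ℚ) - i) * (c i * c (m - i))) (m+1)]
        apply Finset.sum_congr rfl
        intro i hi
        simp only [Finset.mem_range] at hi
        have hi' : i ≤ m := Nat.lt_succ_iff.mp hi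
        simp only [Nat.add_sub_cancel]
        rw [Nat.sub_sub_self hi', Nat.cast_sub hi']
        ring
      have h2 : (2 : ℚ) * ∑ i ∈ range (m + 1), (i : ℚ) * (c i * c (m - i))
          = (m : ℚ) * ∑ i ∈ range (m + 1), c i * c (m - i) := by
        rw [two_mul]
        nth_rewrite 2 [h1]
        rw [← Finset.sum_add_distrib, Finset.mul_sum]
        apply Finset.sum_congr rfl
        intro i _; ring
      linarith [h2]
    have hrec : ∀ i : ℕ, ((i : ℚ) + 1) * c (i + 1) = (4 * i + 2) * c i := by
      intro i
      have := Nat.succ_mul_centralBinom_succ i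
      have h := congrArg (fun x : ℕ => (x : ℚ)) this
      push_cast at h
      rw [hc]; push_cast
      linarith [h]
    -- (n+2) * a(n+1) where a(n+1) = sum over range (n+2)
    have main : ((n : ℚ) + 1) * ∑ i ∈ range (n + 2), c i * c (n + 1 - i)
        = 4 * ((n : ℚ) + 1) * ∑ i ∈ range (n + 1), c i * c (n - i) := by
      have expand : ((n : ℚ) + 1) * ∑ i ∈ range (n + 2), c i * c (n + 1 - i)
          = 2 * ∑ i ∈ range (n + 2), (i : ℚ) * (c i * c (n + 1 - i)) := by
        rw [key (n + 1)]
        push_cast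
        ring
      have shift : ∑ i ∈ range (n + 2), (i : ℚ) * (c i * c (n + 1 - i))
          = ∑ i ∈ range (n + 1), ((i : ℚ) + 1) * c (i + 1) * c (n - i) := by
        rw [Finset.sum_range_succ']
        simp only [Nat.cast_zero, zero_mul, add_zero]
        apply Finset.sum_congr rfl
        intro i _
        have : n + 1 - (i + 1) = n - i := by omega
        rw [this]
        push_cast
        ring
      have step : ∑ i ∈ range (n + 1), ((i : ℚ) + 1) * c (i + 1) * c (n - i)
          = 4 * (∑ i ∈ range (n + 1), (i : ℚ) * (c i * c (n - i)))
            + 2 * ∑ i ∈ range (n + 1), c i * c (n - i) := by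
        rw [Finset.mul_sum, Finset.mul_sum, ← Finset.sum_add_distrib]
        apply Finset.sum_congr rfl
        intro i _
        rw [hrec i]
        ring
      rw [expand, shift, step, key n]
      ring
    have hne : ((n : ℚ) + 1) ≠ 0 := by positivity
    have h4 : ∑ i ∈ range (n + 2), c i * c (n + 1 - i)
        = 4 * ∑ i ∈ range (n + 1), c i * c (n - i) :=
      mul_left_cancel₀ hne (by rw [main]; ring)
    show ∑ i ∈ range (n + 2), c i * c (n + 1 - i) = 4 ^ (n + 1)
    rw [h4, ih]; ring

lemma centralBinom_conv_nat (n : ℕ) :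
    ∑ i ∈ range (n + 1), Nat.centralBinom i * Nat.centralBinom (n - i) = 4 ^ n := by
  have h := centralBinom_convolution n
  exact_mod_cast (by push_cast at h ⊢; exact_mod_cast h : ((∑ i ∈ range (n + 1),
    Nat.centralBinom i * Nat.centralBinom (n - i) : ℕ) : ℚ) = ((4 ^ n : ℕ) : ℚ))

lemma centralBinom_le_four_pow (n : ℕ) : Nat.centralBinom n ≤ 4 ^ n := by
  have h1 : Nat.centralBinom n ≤ ∑ m ∈ range (2 * n + 1), (2 * n).choose m := by
    apply Finset.single_le_sum (f := fun m => (2 * n).choose m)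
    · intro i _; exact Nat.zero_le _
    · exact Finset.mem_range.mpr (by omega)
  calc Nat.centralBinom n ≤ ∑ m ∈ range (2 * n + 1), (2 * n).choose m := h1
    _ = 2 ^ (2 * n) := Nat.sum_range_choose (2 * n)
    _ = 4 ^ n := by rw [pow_mul]; norm_num

/-- If `S₀` is an approximate idempotent in a unital Banach algebra, with
`R = S₀ - S₀²`, `‖R‖ < 1/4`, then `T = (2S₀-1)·Σ C(2k,k) R^k` satisfies `T² = 1`,
and `S = (1+T)/2` is an idempotent. -/
theorem stmt_4 {A : Type*} [NormedRing A] [NormedAlgebra ℝ A] [CompleteSpace A]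
    (S₀ R : A) (hR : R = S₀ - S₀ ^ 2) (hnorm : ‖R‖ < 1 / 4) :
    (2 * S₀ - 1) * (∑' k : ℕ, (Nat.centralBinom k : A) * R ^ k) *
      ((2 * S₀ - 1) * (∑' k : ℕ, (Nat.centralBinom k : A) * R ^ k)) = 1 ∧
    ((2⁻¹ : ℝ) • (1 + (2 * S₀ - 1) * (∑' k : ℕ, (Nat.centralBinom k : A) * R ^ k))) *
      ((2⁻¹ : ℝ) • (1 + (2 * S₀ - 1) * (∑' k : ℕ, (Nat.centralBinom k : A) * R ^ k)))
      = (2⁻¹ : ℝ) • (1 + (2 * S₀ - 1) * (∑' k : ℕ, (Nat.centralBinom k : A) * R ^ k)) := by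
  set f : ℕ → A := fun k => (Nat.centralBinom k : A) * R ^ k with hfdef
  set F : A := ∑' k : ℕ, f k with hF
  set a : A := 2 * S₀ - 1 with ha
  -- Commutation facts
  have hcomm : Commute S₀ R := by
    rw [hR]; exact (Commute.refl S₀).sub_right ((Commute.refl S₀).pow_right 2)
  have hcomf : ∀ k, Commute S₀ (f k) := fun k =>
    ((Nat.cast_commute _ S₀).symm).mul_right (hcomm.pow_right k)
  have haf : ∀ k, Commute a (f k) := fun k =>
    (((Commute.ofNat_left 2 (f k)).mul_left (hcomf k)).sub_left (Commute.one_left (f k)))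
  have haF : Commute a F := Commute.tsum_right a haf
  -- Summability of norms
  have h4R : ‖(4 : A) * R‖ < 1 := by
    have : (4 : A) * R = (4 : ℕ) • R := by simp [nsmul_eq_mul]
    rw [this]
    calc ‖(4 : ℕ) • R‖ ≤ (4 : ℕ) * ‖R‖ := norm_nsmul_le
      _ < 1 := by push_cast; linarith
  have hrlt : 4 * ‖R‖ < 1 := by linarith
  have hrnn : (0 : ℝ) ≤ 4 * ‖R‖ := by positivity
  have hbound : ∀ k, ‖f (k + 1)‖ ≤ (4 * ‖R‖) ^ (k + 1) := by
    intro k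
    have h1 : f (k + 1) = (Nat.centralBinom (k + 1)) • R ^ (k + 1) := by
      simp [hfdef, nsmul_eq_mul]
    rw [h1]
    calc ‖(Nat.centralBinom (k + 1)) • R ^ (k + 1)‖
        ≤ (Nat.centralBinom (k + 1) : ℝ) * ‖R ^ (k + 1)‖ := norm_nsmul_le
      _ ≤ (4 ^ (k + 1) : ℝ) * ‖R‖ ^ (k + 1) := by
          apply mul_le_mul
          · exact_mod_cast centralBinom_le_four_pow (k + 1)
          · exact norm_pow_le' R (Nat.succ_pos k)
          · exact norm_nonneg _
          · positivity
      _ = (4 * ‖R‖) ^ (k + 1) := by rw [mul_pow]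
  have hsumnorm : Summable fun k => ‖f k‖ := by
    rw [← summable_nat_add_iff 1]
    apply Summable.of_nonneg_of_le (fun k => norm_nonneg _) hbound
    exact (summable_geometric_of_lt_one hrnn hrlt).comp_injective (add_left_injective 1) |>.congr
      (fun k => rfl)
  -- Cauchy product
  have hFF : F * F = ∑' n : ℕ, ((4 : A) * R) ^ n := by
    rw [hF, tsum_mul_tsum_eq_tsum_sum_antidiagonal_of_summable_norm hsumnorm hsumnorm]
    apply tsum_congr
    intro n
    rw [Finset.Nat.sum_antidiagonal_eq_sum_range_succ_mk]
    have : ∀ i ∈ range (n + 1), f (i, n - i).1 * f (i, n - i).2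
        = ((Nat.centralBinom i * Nat.centralBinom (n - i) : ℕ) : A) * R ^ n := by
      intro i hi
      simp only [Finset.mem_range] at hi
      have hi' : i ≤ n := Nat.lt_succ_iff.mp hi
      simp only [hfdef]
      have hc : Commute ((Nat.centralBinom (n - i) : A)) (R ^ i) :=
        Nat.cast_commute _ _
      calc (Nat.centralBinom i : A) * R ^ i * ((Nat.centralBinom (n - i) : A) * R ^ (n - i))
          = (Nat.centralBinom i : A) * (Nat.centralBinom (n - i) : A) * (R ^ i * R ^ (n - i)) := by
            rw [mul_assoc, ← mul_assoc (R ^ i), ← hc.eq]; simp [mul_assoc]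
        _ = ((Nat.centralBinom i * Nat.centralBinom (n - i) : ℕ) : A) * R ^ n := by
            rw [← pow_add, Nat.add_sub_cancel' hi', Nat.cast_mul]
    rw [Finset.sum_congr rfl this, ← Finset.sum_mul, ← Nat.cast_sum, centralBinom_conv_nat]
    have hc4 : Commute (4 : A) R := Commute.ofNat_left 4 R
    rw [hc4.mul_pow]
    norm_cast
  -- Part 1
  have hsq : a * a = 1 - (4 : A) * R := by
    rw [ha, hR]; noncomm_ring
  have part1 : a * F * (a * F) = 1 := by
    rw [haF.symm.mul_mul_mul_comm a F, hsq, hFF, mul_neg_geom_series _ h4R]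
  refine ⟨part1, ?_⟩
  set T : A := a * F with hT
  have hexp : (1 + T) * (1 + T) = (2 : ℝ) • (1 + T) := by
    rw [mul_add, add_mul, add_mul, part1]
    simp only [one_mul, mul_one]
    rw [two_smul]
    abel
  rw [smul_mul_smul_comm, hexp, smul_smul]
  norm_num
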